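/- Let d ≥ 1 be an integer. There exists a constant C > 0, depending only on d, such that for every k ∈ ℤ^d with |k| ≥ 1, one has ∑_{m ∈ ℤ^d, 1 ≤ |m| ≤ 2|k|} |m|^{1−d} (1+|k−m|)^{3−d} ≤ C |k|^{4−d}. -/

import Mathlib

open scoped BigOperators

/-- Euclidean norm of a lattice point `n ∈ ℤ^d`, viewed in `ℝ^d`. -/
noncomputable def znorm {d : ℕ} (n : Fin d → ℤ) : ℝ :=
  Real.sqrt (∑ i, ((n i : ℝ)) ^ 2)

section basics
variable {d : ℕ}

/-- view as Euclidean space vector -/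
noncomputable def toE {d : ℕ} (n : Fin d → ℤ) : EuclideanSpace ℝ (Fin d) :=
  WithLp.toLp 2 (fun i => (n i : ℝ))

lemma znorm_eq (n : Fin d → ℤ) : znorm n = ‖toE n‖ := by
  rw [EuclideanSpace.norm_eq, znorm]
  congr 1
  apply Finset.sum_congr rfl
  intro i _
  show ((n i : ℝ))^2 = ‖(n i : ℝ)‖^2
  rw [Real.norm_eq_abs, sq_abs]

lemma znorm_nonneg (n : Fin d → ℤ) : 0 ≤ znorm n := Real.sqrt_nonneg _

lemma toE_sub (a b : Fin d → ℤ) : toE (a - b) = toE a - toE b := by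
  ext i; simp [toE]

lemma znorm_sub_le (a b : Fin d → ℤ) : znorm (a - b) ≤ znorm a + znorm b := by
  rw [znorm_eq, znorm_eq, znorm_eq, toE_sub]
  exact norm_sub_le _ _

lemma znorm_le_add_sub (k m : Fin d → ℤ) : znorm k ≤ znorm m + znorm (k - m) := by
  rw [znorm_eq, znorm_eq, znorm_eq, toE_sub]
  calc ‖toE k‖ = ‖toE m + (toE k - toE m)‖ := by rw [add_sub_cancel]
    _ ≤ _ := norm_add_le _ _

lemma abs_coord_le_znorm (n : Fin d → ℤ) (i : Fin d) : (|n i| : ℝ) ≤ znorm n := by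
  rw [znorm]
  rw [← Real.sqrt_sq_eq_abs]
  apply Real.sqrt_le_sqrt
  exact Finset.single_le_sum (f := fun j => ((n j : ℝ))^2) (fun j _ => sq_nonneg _) (Finset.mem_univ i)

lemma one_le_znorm_of_ne_zero {n : Fin d → ℤ} (hn : n ≠ 0) : 1 ≤ znorm n := by
  obtain ⟨i, hi⟩ : ∃ i, n i ≠ 0 := by
    by_contra h; push_neg at h; exact hn (funext h)
  have h1 : (1 : ℝ) ≤ |(n i : ℝ)| := by
    rw [← Int.cast_abs]; exact_mod_cast Int.one_le_abs hi
  exact h1.trans (abs_coord_le_znorm n i)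

end basics

open Finset

section boxes
variable {d : ℕ}

noncomputable def Box (d N : ℕ) : Finset (Fin d → ℤ) :=
  Finset.Icc (fun _ => -(N:ℤ)) (fun _ => (N:ℤ))

lemma card_Box (d N : ℕ) : (Box d N).card = (2*N+1)^d := by
  rw [Box, Pi.card_Icc]
  simp [Int.card_Icc]
  congr 1
  omega

end boxes

section boxmem
variable {d : ℕ}

lemma mem_Box_of_znorm_le {m : Fin d → ℤ} {N : ℕ} (h : znorm m ≤ N) : m ∈ Box d N := by
  rw [Box, Finset.mem_Icc]
  have key : ∀ i, |m i| ≤ (N : ℤ) := by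
    intro i
    have h2 : |(m i : ℝ)| ≤ (N : ℝ) := (abs_coord_le_znorm m i).trans h
    rw [← Int.cast_abs] at h2
    exact_mod_cast h2
  constructor <;> intro i
  · exact (abs_le.mp (key i)).1
  · exact (abs_le.mp (key i)).2

lemma finite_znorm_le (T : ℝ) : {m : Fin d → ℤ | znorm m ≤ T}.Finite := by
  apply Set.Finite.subset (Box d ⌈T⌉₊).finite_toSet
  intro m hm
  simp only [Set.mem_setOf_eq] at hm
  exact mem_Box_of_znorm_le (hm.trans (Nat.le_ceil T))

end boxmem

lemma geom_bound {x : ℝ} (hx : 2 ≤ x) (J : ℕ) :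
    ∑ j ∈ Finset.range (J+1), x^j ≤ 2 * x^J := by
  induction J with
  | zero => simp
  | succ J ih =>
    rw [Finset.sum_range_succ]
    have hxpos : (0:ℝ) < x^J := pow_pos (by linarith) J
    have : 2 * x^J ≤ x^(J+1) := by
      rw [pow_succ]
      calc 2 * x^J = x^J * 2 := by ring
        _ ≤ x^J * x := by nlinarith
    calc ∑ j ∈ Finset.range (J+1), x^j + x^(J+1) ≤ 2*x^J + x^(J+1) := by linarith
      _ ≤ x^(J+1) + x^(J+1) := by linarith
      _ = 2 * x^(J+1) := by ring

lemma dyadic_sum (d : ℕ) (e : ℝ) (he : e ≤ 0) (hde : 1 ≤ (d:ℝ) + e)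
    (R : ℝ) (hR : 1 ≤ R) (F : Finset (Fin d → ℤ))
    (hF : ∀ m ∈ F, 1 ≤ znorm m ∧ znorm m ≤ R) :
    ∑ m ∈ F, znorm m ^ e ≤ 2 * 5^d * R ^ ((d:ℝ) + e) := by
  set J := Nat.log 2 ⌊R⌋₊ with hJ
  have hRf : 1 ≤ ⌊R⌋₊ := Nat.le_floor (by exact_mod_cast hR)
  have h2J : ((2:ℝ))^J ≤ R := by
    have h1 : (2:ℕ)^J ≤ ⌊R⌋₊ := Nat.pow_log_le_self 2 (by omega)
    have h2 : ((⌊R⌋₊ : ℝ)) ≤ R := Nat.floor_le (by linarith)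
    calc ((2:ℝ))^J = (((2:ℕ)^J : ℕ) : ℝ) := by push_cast; ring
      _ ≤ (⌊R⌋₊ : ℝ) := by exact_mod_cast h1
      _ ≤ R := h2
  set p : ℕ → (Fin d → ℤ) → Prop := fun j m => (2:ℝ)^j ≤ znorm m ∧ znorm m < (2:ℝ)^(j+1) with hp
  have hpdec : ∀ j, DecidablePred (p j) := fun j m => instDecidableAnd
  classical
  -- covering
  have hcov : F ⊆ (Finset.range (J+1)).biUnion (fun j => F.filter (p j)) := by
    intro m hm
    obtain ⟨h1, h2⟩ := hF m hm
    set a := ⌊znorm m⌋₊ with ha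
    have ha1 : 1 ≤ a := Nat.le_floor (by exact_mod_cast h1)
    set j := Nat.log 2 a with hj
    have hjJ : j ≤ J := Nat.log_mono_right (Nat.floor_le_floor h2)
    refine Finset.mem_biUnion.mpr ⟨j, Finset.mem_range.mpr (by omega), Finset.mem_filter.mpr ⟨hm, ?_, ?_⟩⟩
    · have h3 : (2:ℕ)^j ≤ a := Nat.pow_log_le_self 2 (by omega)
      have h4 : ((a:ℝ)) ≤ znorm m := Nat.floor_le (znorm_nonneg m)
      calc ((2:ℝ))^j = (((2:ℕ)^j : ℕ) : ℝ) := by push_cast; ring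
        _ ≤ (a : ℝ) := by exact_mod_cast h3
        _ ≤ znorm m := h4
    · have h3 : a < (2:ℕ)^(j+1) := Nat.lt_pow_succ_log_self (by norm_num) a
      have h4 : znorm m < a + 1 := Nat.lt_floor_add_one _
      have h5 : (a:ℝ) + 1 ≤ ((2:ℕ)^(j+1) : ℕ) := by exact_mod_cast h3
      calc znorm m < (a:ℝ) + 1 := h4
        _ ≤ (((2:ℕ)^(j+1) : ℕ) : ℝ) := h5
        _ = (2:ℝ)^(j+1) := by push_cast; ring
  -- disjointness
  have hdisj : (↑(Finset.range (J+1)) : Set ℕ).PairwiseDisjoint (fun j => F.filter (p j)) := by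
    intro i _ j _ hij
    apply Finset.disjoint_left.mpr
    intro m hmi hmj
    obtain ⟨_, hi1, hi2⟩ := Finset.mem_filter.mp hmi
    obtain ⟨_, hj1, hj2⟩ := Finset.mem_filter.mp hmj
    rcases lt_or_gt_of_ne hij with h | h
    · have : ((2:ℝ))^(i+1) ≤ (2:ℝ)^j := pow_le_pow_right₀ (by norm_num) (by omega)
      linarith
    · have : ((2:ℝ))^(j+1) ≤ (2:ℝ)^i := pow_le_pow_right₀ (by norm_num) (by omega)
      linarith
  set x : ℝ := (2:ℝ) ^ ((d:ℝ) + e) with hx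
  have hxpos : 0 < x := Real.rpow_pos_of_pos (by norm_num) _
  have hx2 : 2 ≤ x := by
    calc (2:ℝ) = (2:ℝ) ^ (1:ℝ) := (Real.rpow_one 2).symm
      _ ≤ x := Real.rpow_le_rpow_of_exponent_le (by norm_num) hde
  -- per-scale bound
  have hper : ∀ j ∈ Finset.range (J+1), ∑ m ∈ F.filter (p j), znorm m ^ e ≤ 5^d * x^j := by
    intro j _
    have hsub : F.filter (p j) ⊆ Box d (2^(j+1)) := by
      intro m hm
      obtain ⟨_, _, h2⟩ := Finset.mem_filter.mp hm
      apply mem_Box_of_znorm_le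
      calc znorm m ≤ (2:ℝ)^(j+1) := le_of_lt h2
        _ = ((2^(j+1) : ℕ) : ℝ) := by push_cast; ring
    have hcard : (F.filter (p j)).card ≤ (5 * 2^j)^d := by
      calc (F.filter (p j)).card ≤ (Box d (2^(j+1))).card := Finset.card_le_card hsub
        _ = (2 * 2^(j+1) + 1)^d := card_Box d _
        _ ≤ (5 * 2^j)^d := by
            apply Nat.pow_le_pow_left
            have : 1 ≤ 2^j := Nat.one_le_two_pow
            omega
    have hterm : ∀ m ∈ F.filter (p j), znorm m ^ e ≤ ((2:ℝ)^j) ^ e := by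
      intro m hm
      obtain ⟨_, h1, _⟩ := Finset.mem_filter.mp hm
      exact Real.rpow_le_rpow_of_nonpos (by positivity) h1 he
    calc ∑ m ∈ F.filter (p j), znorm m ^ e
        ≤ (F.filter (p j)).card • (((2:ℝ)^j) ^ e) := Finset.sum_le_card_nsmul _ _ _ hterm
      _ = ((F.filter (p j)).card : ℝ) * (((2:ℝ)^j) ^ e) := by rw [nsmul_eq_mul]
      _ ≤ ((5 * 2^j)^d : ℕ) * (((2:ℝ)^j) ^ e) := by
          apply mul_le_mul_of_nonneg_right _ (Real.rpow_nonneg (by positivity) e)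
          exact_mod_cast hcard
      _ = 5^d * x^j := by
          push_cast
          rw [mul_pow]
          have e1 : ((2:ℝ)^j)^d = ((2:ℝ)^j) ^ (d:ℝ) := by
            rw [Real.rpow_natCast]
          have e2 : ((2:ℝ)^j) ^ (d:ℝ) * ((2:ℝ)^j) ^ e = ((2:ℝ)^j) ^ ((d:ℝ) + e) := by
            rw [← Real.rpow_add (by positivity)]
          have e3 : ((2:ℝ)^j) ^ ((d:ℝ) + e) = x^j := by
            rw [← Real.rpow_natCast (2:ℝ) j, ← Real.rpow_mul (by norm_num),
              mul_comm, Real.rpow_mul (by norm_num), Real.rpow_natCast]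
          rw [mul_assoc, e1, e2, e3]
  calc ∑ m ∈ F, znorm m ^ e
      ≤ ∑ m ∈ (Finset.range (J+1)).biUnion (fun j => F.filter (p j)), znorm m ^ e :=
        Finset.sum_le_sum_of_subset_of_nonneg hcov
          (fun m _ _ => Real.rpow_nonneg (znorm_nonneg m) e)
    _ = ∑ j ∈ Finset.range (J+1), ∑ m ∈ F.filter (p j), znorm m ^ e :=
        Finset.sum_biUnion hdisj
    _ ≤ ∑ j ∈ Finset.range (J+1), 5^d * x^j := Finset.sum_le_sum hper
    _ = 5^d * ∑ j ∈ Finset.range (J+1), x^j := by rw [Finset.mul_sum]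
    _ ≤ 5^d * (2 * x^J) := by
        apply mul_le_mul_of_nonneg_left (geom_bound hx2 J) (by positivity)
    _ = 2 * 5^d * x^J := by ring
    _ ≤ 2 * 5^d * R ^ ((d:ℝ) + e) := by
        apply mul_le_mul_of_nonneg_left _ (by positivity)
        have : x^J = ((2:ℝ)^J) ^ ((d:ℝ)+e) := by
          rw [← Real.rpow_natCast (2:ℝ) J, ← Real.rpow_mul (by norm_num),
            mul_comm, Real.rpow_mul (by norm_num), Real.rpow_natCast]
        rw [this]
        exact Real.rpow_le_rpow (by positivity) h2J (by linarith)

-- sum of |m|^{1-d} over {1 ≤ |m| ≤ R}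
lemma sum2_bound (d : ℕ) (hd : 0 < d) (R : ℝ) (hR : 1 ≤ R) (F : Finset (Fin d → ℤ))
    (hF : ∀ m ∈ F, 1 ≤ znorm m ∧ znorm m ≤ R) :
    ∑ m ∈ F, znorm m ^ ((1:ℝ) - d) ≤ 2 * 5^d * R := by
  have hd1 : (1:ℝ) ≤ d := by exact_mod_cast hd
  have h := dyadic_sum d (1 - (d:ℝ)) (by linarith) (by ring_nf; norm_num) R hR F hF
  have he : (d:ℝ) + (1 - (d:ℝ)) = 1 := by ring
  rwa [he, Real.rpow_one] at h

lemma znorm_zero {d : ℕ} : znorm (0 : Fin d → ℤ) = 0 := by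
  simp [znorm]

-- sum of (1+|k-m|)^{3-d} over F, via change of variables, assuming d ≥ 4
lemma sum1_bound (d : ℕ) (hd4 : 4 ≤ d) (k : Fin d → ℤ) (K : ℝ) (hK : 1 ≤ K)
    (hk : znorm k ≤ K)
    (F : Finset (Fin d → ℤ)) (hF : ∀ m ∈ F, znorm m ≤ 2 * K) :
    ∑ m ∈ F, (1 + znorm (k - m)) ^ ((3:ℝ) - d) ≤ 1 + 54 * 5^d * K ^ (3:ℝ) := by
  classical
  have hd4' : (4:ℝ) ≤ d := by exact_mod_cast hd4
  set g : (Fin d → ℤ) → ℝ := fun n => (1 + znorm n) ^ ((3:ℝ) - d) with hg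
  have hgnn : ∀ n, 0 ≤ g n := fun n =>
    Real.rpow_nonneg (by linarith [znorm_nonneg n]) _
  set G := F.image (fun m => k - m) with hGdef
  have himg : ∑ m ∈ F, (1 + znorm (k - m)) ^ ((3:ℝ) - d) = ∑ n ∈ G, g n := by
    rw [hGdef, Finset.sum_image]
    intro m _ m' _ h
    exact sub_right_injective h
  have hGmem : ∀ n ∈ G, znorm n ≤ 3 * K := by
    intro n hn
    obtain ⟨m, hm, rfl⟩ := Finset.mem_image.mp hn
    calc znorm (k - m) ≤ znorm k + znorm m := znorm_sub_le k m
      _ ≤ K + 2 * K := by linarith [hF m hm]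
      _ = 3 * K := by ring
  -- peel off the possible n = 0 term
  have hsplit : ∑ n ∈ G, g n ≤ 1 + ∑ n ∈ G.erase 0, g n := by
    by_cases h0 : (0 : Fin d → ℤ) ∈ G
    · rw [← Finset.sum_erase_add G _ h0]
      have : g 0 = 1 := by
        rw [hg]; simp [znorm_zero]
      rw [this]; linarith
    · rw [Finset.erase_eq_of_notMem h0]
      have : 0 ≤ ∑ n ∈ G.erase 0, g n := Finset.sum_nonneg (fun n _ => hgnn n)
      rw [Finset.erase_eq_of_notMem h0] at this
      linarith
  -- bound the nonzero part
  have hmem' : ∀ n ∈ G.erase 0, 1 ≤ znorm n ∧ znorm n ≤ 3 * K := by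
    intro n hn
    obtain ⟨hne, hnG⟩ := Finset.mem_erase.mp hn
    exact ⟨one_le_znorm_of_ne_zero hne, hGmem n hnG⟩
  have hstep : ∑ n ∈ G.erase 0, g n ≤ ∑ n ∈ G.erase 0, znorm n ^ ((3:ℝ) - d) := by
    apply Finset.sum_le_sum
    intro n hn
    have h1 : 1 ≤ znorm n := (hmem' n hn).1
    exact Real.rpow_le_rpow_of_nonpos (by linarith) (by linarith) (by linarith)
  have hdy := dyadic_sum d (3 - (d:ℝ)) (by linarith) (by ring_nf; norm_num)
      (3 * K) (by linarith) (G.erase 0) hmem'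
  have he : (d:ℝ) + (3 - (d:ℝ)) = 3 := by ring
  rw [he] at hdy
  have h3K : (3 * K) ^ (3:ℝ) = 27 * K ^ (3:ℝ) := by
    rw [Real.mul_rpow (by norm_num) (by linarith)]
    congr 1
    rw [show (3:ℝ) = ((3:ℕ):ℝ) by norm_num, Real.rpow_natCast]
    norm_num
  rw [h3K] at hdy
  have h5 : (1:ℝ) ≤ 5^d := one_le_pow₀ (by norm_num)
  calc ∑ m ∈ F, (1 + znorm (k - m)) ^ ((3:ℝ) - d) = ∑ n ∈ G, g n := himg
    _ ≤ 1 + ∑ n ∈ G.erase 0, g n := hsplit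
    _ ≤ 1 + ∑ n ∈ G.erase 0, znorm n ^ ((3:ℝ) - d) := by linarith
    _ ≤ 1 + 2 * 5^d * (27 * K ^ (3:ℝ)) := by linarith
    _ = 1 + 54 * 5^d * K ^ (3:ℝ) := by ring

lemma ptwise (d : ℕ) (hd4 : (4:ℝ) ≤ d) (K a b : ℝ) (hK : 1 ≤ K) (ha : 0 ≤ a)
    (hb : 0 ≤ b) (htri : K ≤ a + b) :
    a ^ ((1:ℝ)-d) * (1+b) ^ ((3:ℝ)-d) ≤
      2^d * K ^ ((1:ℝ)-d) * (1+b) ^ ((3:ℝ)-d) + 2^d * K ^ ((3:ℝ)-d) * a ^ ((1:ℝ)-d) := by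
  have hKpos : (0:ℝ) < K := by linarith
  have hhalf : (0:ℝ) < K / 2 := by linarith
  have half : ∀ e : ℝ, -e ≤ (d:ℝ) → (K/2) ^ e ≤ 2^d * K ^ e := by
    intro e he
    rw [Real.div_rpow (le_of_lt hKpos) (by norm_num)]
    rw [div_eq_mul_inv, ← Real.rpow_neg (by norm_num)]
    have h1 : (2:ℝ) ^ (-e) ≤ (2:ℝ) ^ ((d:ℝ)) := Real.rpow_le_rpow_of_exponent_le (by norm_num) he
    have h2 : (2:ℝ) ^ ((d:ℝ)) = (2:ℝ)^d := Real.rpow_natCast 2 d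
    calc K ^ e * (2:ℝ) ^ (-e) ≤ K ^ e * (2:ℝ)^d := by
          apply mul_le_mul_of_nonneg_left _ (Real.rpow_nonneg (le_of_lt hKpos) e)
          rw [← h2]; exact h1
      _ = 2^d * K ^ e := by ring
  have hBnn : (0:ℝ) ≤ (1+b) ^ ((3:ℝ)-d) := Real.rpow_nonneg (by linarith) _
  have hAnn : (0:ℝ) ≤ a ^ ((1:ℝ)-d) := Real.rpow_nonneg ha _
  rcases le_or_gt (K/2) a with hcase | hcase
  · have h1 : a ^ ((1:ℝ)-d) ≤ (K/2) ^ ((1:ℝ)-d) :=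
      Real.rpow_le_rpow_of_nonpos hhalf hcase (by linarith)
    have h2 : (K/2) ^ ((1:ℝ)-d) ≤ 2^d * K ^ ((1:ℝ)-d) := half _ (by push_cast; linarith)
    have hsecond : (0:ℝ) ≤ 2^d * K ^ ((3:ℝ)-d) * a ^ ((1:ℝ)-d) := by positivity
    calc a ^ ((1:ℝ)-d) * (1+b) ^ ((3:ℝ)-d)
        ≤ (2^d * K ^ ((1:ℝ)-d)) * (1+b) ^ ((3:ℝ)-d) := by
          apply mul_le_mul_of_nonneg_right (h1.trans h2) hBnn
      _ ≤ _ := by linarith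
  · have hb2 : K/2 ≤ 1 + b := by linarith
    have h1 : (1+b) ^ ((3:ℝ)-d) ≤ (K/2) ^ ((3:ℝ)-d) :=
      Real.rpow_le_rpow_of_nonpos hhalf hb2 (by linarith)
    have h2 : (K/2) ^ ((3:ℝ)-d) ≤ 2^d * K ^ ((3:ℝ)-d) := half _ (by push_cast; linarith)
    have hfirst : (0:ℝ) ≤ 2^d * K ^ ((1:ℝ)-d) * (1+b) ^ ((3:ℝ)-d) := by positivity
    calc a ^ ((1:ℝ)-d) * (1+b) ^ ((3:ℝ)-d)
        ≤ a ^ ((1:ℝ)-d) * (2^d * K ^ ((3:ℝ)-d)) := by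
          apply mul_le_mul_of_nonneg_left (h1.trans h2) hAnn
      _ = 2^d * K ^ ((3:ℝ)-d) * a ^ ((1:ℝ)-d) := by ring
      _ ≤ _ := by linarith

lemma main_finset (d : ℕ) (hd : 0 < d) (k : Fin d → ℤ) (hk : 1 ≤ znorm k)
    (F : Finset (Fin d → ℤ)) (hF : ∀ m ∈ F, 1 ≤ znorm m ∧ znorm m ≤ 2 * znorm k) :
    ∑ m ∈ F, znorm m ^ ((1:ℝ) - d) * (1 + znorm (k - m)) ^ ((3:ℝ) - d)
      ≤ 300 * 10^d * znorm k ^ ((4:ℝ) - d) := by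
  classical
  set K := znorm k with hKdef
  have hKpos : (0:ℝ) < K := by linarith
  have h2K : (1:ℝ) ≤ 2 * K := by linarith
  have hXnn : (0:ℝ) ≤ K ^ ((4:ℝ) - d) := Real.rpow_nonneg (le_of_lt hKpos) _
  set X := K ^ ((4:ℝ) - d) with hX
  have hS2 : ∑ m ∈ F, znorm m ^ ((1:ℝ) - d) ≤ 4 * 5^d * K := by
    have := sum2_bound d hd (2*K) h2K F hF
    linarith
  have h510 : (5:ℝ)^d ≤ 10^d := pow_le_pow_left₀ (by norm_num) (by norm_num) d
  have h210 : (2:ℝ)^d ≤ 10^d := pow_le_pow_left₀ (by norm_num) (by norm_num) d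
  have h5nn : (0:ℝ) ≤ 5^d := by positivity
  have h10nn : (0:ℝ) ≤ 10^d := by positivity
  by_cases hd3 : (d:ℝ) ≤ 3
  · -- d ≤ 3 : exponent 3 - d is nonnegative
    have he2 : (0:ℝ) ≤ 3 - d := by linarith
    have hptw : ∀ m ∈ F, znorm m ^ ((1:ℝ) - d) * (1 + znorm (k - m)) ^ ((3:ℝ) - d)
        ≤ znorm m ^ ((1:ℝ) - d) * (4 * K) ^ ((3:ℝ) - d) := by
      intro m hm
      have h1 : znorm (k - m) ≤ K + 2 * K := by
        have := znorm_sub_le k m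
        have := (hF m hm).2
        linarith
      have h2 : 1 + znorm (k - m) ≤ 4 * K := by linarith
      apply mul_le_mul_of_nonneg_left _ (Real.rpow_nonneg (znorm_nonneg m) _)
      exact Real.rpow_le_rpow (by linarith [znorm_nonneg (k - m)]) h2 he2
    have h4K : (4 * K) ^ ((3:ℝ) - d) ≤ 64 * K ^ ((3:ℝ) - d) := by
      rw [Real.mul_rpow (by norm_num) (le_of_lt hKpos)]
      apply mul_le_mul_of_nonneg_right _ (Real.rpow_nonneg (le_of_lt hKpos) _)
      calc (4:ℝ) ^ ((3:ℝ) - d) ≤ (4:ℝ) ^ (3:ℝ) :=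
            Real.rpow_le_rpow_of_exponent_le (by norm_num) (by linarith [Nat.cast_nonneg (α := ℝ) d])
        _ = 64 := by
            rw [show (3:ℝ) = ((3:ℕ):ℝ) by norm_num, Real.rpow_natCast]; norm_num
    have hcomb : K ^ ((3:ℝ) - d) * K = X := by
      calc K ^ ((3:ℝ) - d) * K = K ^ ((3:ℝ) - d) * K ^ (1:ℝ) := by rw [Real.rpow_one]
        _ = K ^ ((3:ℝ) - d + 1) := (Real.rpow_add hKpos _ _).symm
        _ = X := by rw [hX]; congr 1; ring
    calc ∑ m ∈ F, znorm m ^ ((1:ℝ) - d) * (1 + znorm (k - m)) ^ ((3:ℝ) - d)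
        ≤ ∑ m ∈ F, znorm m ^ ((1:ℝ) - d) * (4 * K) ^ ((3:ℝ) - d) := Finset.sum_le_sum hptw
      _ = (∑ m ∈ F, znorm m ^ ((1:ℝ) - d)) * (4 * K) ^ ((3:ℝ) - d) := by
          rw [← Finset.sum_mul]
      _ ≤ (4 * 5^d * K) * (64 * K ^ ((3:ℝ) - d)) := by
          apply mul_le_mul hS2 h4K (Real.rpow_nonneg (by positivity) _) (by positivity)
      _ = 256 * 5^d * (K ^ ((3:ℝ) - d) * K) := by ring
      _ = 256 * 5^d * X := by rw [hcomb]
      _ ≤ 300 * 10^d * X := by nlinarith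
  · -- d ≥ 4
    push_neg at hd3
    have hd4 : 4 ≤ d := by
      have h3 : (3:ℕ) < d := by exact_mod_cast hd3
      omega
    have hd4' : (4:ℝ) ≤ d := by exact_mod_cast hd4
    have hS1 : ∑ m ∈ F, (1 + znorm (k - m)) ^ ((3:ℝ) - d) ≤ 1 + 54 * 5^d * K ^ (3:ℝ) :=
      sum1_bound d hd4 k K hk le_rfl F (fun m hm => (hF m hm).2)
    have hptw : ∀ m ∈ F, znorm m ^ ((1:ℝ) - d) * (1 + znorm (k - m)) ^ ((3:ℝ) - d)
        ≤ 2^d * K ^ ((1:ℝ)-d) * (1 + znorm (k - m)) ^ ((3:ℝ)-d)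
          + 2^d * K ^ ((3:ℝ)-d) * znorm m ^ ((1:ℝ)-d) := by
      intro m hm
      exact ptwise d hd4' K (znorm m) (znorm (k - m)) hk (znorm_nonneg m)
        (znorm_nonneg (k - m)) (znorm_le_add_sub k m)
    have hK1 : K ^ ((1:ℝ) - d) ≤ X := by
      rw [hX]
      exact Real.rpow_le_rpow_of_exponent_le hk (by linarith)
    have hK13 : K ^ ((1:ℝ) - d) * K ^ (3:ℝ) = X := by
      rw [← Real.rpow_add hKpos, hX]; congr 1; ring
    have hK21 : K ^ ((3:ℝ) - d) * K = X := by
      calc K ^ ((3:ℝ) - d) * K = K ^ ((3:ℝ) - d) * K ^ (1:ℝ) := by rw [Real.rpow_one]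
        _ = K ^ ((3:ℝ) - d + 1) := (Real.rpow_add hKpos _ _).symm
        _ = X := by rw [hX]; congr 1; ring
    have hKe1nn : (0:ℝ) ≤ K ^ ((1:ℝ) - d) := Real.rpow_nonneg (le_of_lt hKpos) _
    have hKe2nn : (0:ℝ) ≤ K ^ ((3:ℝ) - d) := Real.rpow_nonneg (le_of_lt hKpos) _
    have hS1nn : (0:ℝ) ≤ ∑ m ∈ F, (1 + znorm (k - m)) ^ ((3:ℝ) - d) :=
      Finset.sum_nonneg (fun m _ => Real.rpow_nonneg (by linarith [znorm_nonneg (k - m)]) _)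
    have hS2nn : (0:ℝ) ≤ ∑ m ∈ F, znorm m ^ ((1:ℝ) - d) :=
      Finset.sum_nonneg (fun m _ => Real.rpow_nonneg (znorm_nonneg m) _)
    calc ∑ m ∈ F, znorm m ^ ((1:ℝ) - d) * (1 + znorm (k - m)) ^ ((3:ℝ) - d)
        ≤ ∑ m ∈ F, (2^d * K ^ ((1:ℝ)-d) * (1 + znorm (k - m)) ^ ((3:ℝ)-d)
            + 2^d * K ^ ((3:ℝ)-d) * znorm m ^ ((1:ℝ)-d)) := Finset.sum_le_sum hptw
      _ = 2^d * K ^ ((1:ℝ)-d) * (∑ m ∈ F, (1 + znorm (k - m)) ^ ((3:ℝ)-d))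
            + 2^d * K ^ ((3:ℝ)-d) * (∑ m ∈ F, znorm m ^ ((1:ℝ)-d)) := by
          rw [Finset.sum_add_distrib, ← Finset.mul_sum, ← Finset.mul_sum]
      _ ≤ 2^d * K ^ ((1:ℝ)-d) * (1 + 54 * 5^d * K ^ (3:ℝ))
            + 2^d * K ^ ((3:ℝ)-d) * (4 * 5^d * K) := by
          apply add_le_add
          · exact mul_le_mul_of_nonneg_left hS1 (by positivity)
          · apply mul_le_mul_of_nonneg_left _ (by positivity)
            calc ∑ m ∈ F, znorm m ^ ((1:ℝ)-d) ≤ 4 * 5^d * K := hS2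
              _ = 4 * 5^d * K := rfl
      _ = 2^d * K ^ ((1:ℝ)-d) + 54 * (2^d * 5^d) * (K ^ ((1:ℝ)-d) * K ^ (3:ℝ))
            + 4 * (2^d * 5^d) * (K ^ ((3:ℝ)-d) * K) := by ring
      _ = 2^d * K ^ ((1:ℝ)-d) + 54 * 10^d * X + 4 * 10^d * X := by
          rw [hK13, hK21, ← mul_pow]; norm_num
      _ ≤ 2^d * X + 54 * 10^d * X + 4 * 10^d * X := by
          have := mul_le_mul_of_nonneg_left hK1 (by positivity : (0:ℝ) ≤ (2:ℝ)^d)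
          linarith
      _ ≤ 300 * 10^d * X := by nlinarith

theorem stmt10 (d : ℕ) (hd : 0 < d) :
    ∃ C : ℝ, 0 < C ∧ ∀ k : Fin d → ℤ, 1 ≤ znorm k →
      ∑' m : {m : Fin d → ℤ // 1 ≤ znorm m ∧ znorm m ≤ 2 * znorm k},
          znorm m.1 ^ ((1 : ℝ) - d) * (1 + znorm (k - m.1)) ^ ((3 : ℝ) - d)
        ≤ C * znorm k ^ ((4 : ℝ) - d) := by
  classical
  refine ⟨300 * 10^d, by positivity, ?_⟩
  intro k hk
  have hSfin : {m : Fin d → ℤ | 1 ≤ znorm m ∧ znorm m ≤ 2 * znorm k}.Finite :=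
    (finite_znorm_le (2 * znorm k)).subset (fun m hm => hm.2)
  haveI : Fintype {m : Fin d → ℤ // 1 ≤ znorm m ∧ znorm m ≤ 2 * znorm k} := hSfin.fintype
  rw [tsum_fintype]
  have hconv : ∑ m : {m : Fin d → ℤ // 1 ≤ znorm m ∧ znorm m ≤ 2 * znorm k},
      znorm m.1 ^ ((1 : ℝ) - d) * (1 + znorm (k - m.1)) ^ ((3 : ℝ) - d)
      = ∑ m ∈ hSfin.toFinset,
        znorm m ^ ((1 : ℝ) - d) * (1 + znorm (k - m)) ^ ((3 : ℝ) - d) := by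
    exact (Finset.sum_subtype hSfin.toFinset (fun x => hSfin.mem_toFinset)
      (fun m => znorm m ^ ((1:ℝ) - d) * (1 + znorm (k - m)) ^ ((3:ℝ) - d))).symm
  rw [hconv]
  exact main_finset d hd k hk hSfin.toFinset (fun m hm => hSfin.mem_toFinset.mp hm)
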